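/- For c > 0, k > c/e an integer, and any x > 1: ∫_k^∞ (c/t)^t dt ≤ e^{x·c/e} · x^{-k} / log x. -/

import Mathlib

open MeasureTheory

/-- ∫_{t>a} exp(-(b t)) dt = exp(-(b a))/b for b > 0. -/
lemma integral_exp_neg_mul_Ioi (a : ℝ) {b : ℝ} (hb : 0 < b) :
    (∫ t in Set.Ioi a, Real.exp (-(b * t))) = Real.exp (-(b * a)) / b := by
  have hderiv : ∀ t ∈ Set.Ici a,
      HasDerivAt (fun t => -Real.exp (-(b * t)) / b) (Real.exp (-(b * t))) t := by
    intro t _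
    have h : HasDerivAt (fun t : ℝ => -(b * t)) (-b) t := by
      simpa using ((hasDerivAt_id t).const_mul (-b))
    have := (h.exp.neg.div_const b)
    convert this using 1
    · rfl
    · rfl
    · rfl
    · field_simp
  have htend : Filter.Tendsto (fun t => -Real.exp (-(b * t)) / b)
      Filter.atTop (nhds 0) := by
    have : Filter.Tendsto (fun t : ℝ => Real.exp (-(b * t))) Filter.atTop (nhds 0) := by
      exact Real.tendsto_exp_atBot.comp
        (Filter.tendsto_neg_atTop_atBot.comp (Filter.tendsto_id.const_mul_atTop hb))
    simpa using (this.neg.div_const b)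
  have hint : IntegrableOn (fun t => Real.exp (-(b * t))) (Set.Ioi a) := by
    refine (exp_neg_integrableOn_Ioi a hb).congr_fun (fun t _ => by dsimp only; rw [neg_mul])
      measurableSet_Ioi
  rw [MeasureTheory.integral_Ioi_of_hasDerivAt_of_tendsto' hderiv hint htend]
  ring

/-- For a > 0, t > 0, (a/t)^t ≤ exp (a / e). -/
lemma rpow_div_le_exp {a t : ℝ} (ha : 0 < a) (ht : 0 < t) :
    (a / t) ^ t ≤ Real.exp (a / Real.exp 1) := by
  have hbase : 0 < a / t := div_pos ha ht
  rw [Real.rpow_def_of_pos hbase, Real.exp_le_exp]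
  have hlog : Real.log (a / t) ≤ a / (t * Real.exp 1) := by
    have h := Real.log_le_sub_one_of_pos
      (show 0 < a / t / Real.exp 1 from div_pos hbase (Real.exp_pos 1))
    rw [Real.log_div hbase.ne' (Real.exp_pos 1).ne', Real.log_exp] at h
    have : a / t / Real.exp 1 = a / (t * Real.exp 1) := by ring
    linarith [this ▸ h]
  calc Real.log (a / t) * t ≤ a / (t * Real.exp 1) * t := by
        exact mul_le_mul_of_nonneg_right hlog ht.le
    _ = a / Real.exp 1 := by field_simp

theorem stmt3 (c : ℝ) (hc : 0 < c) (k : ℕ) (hk : c / Real.exp 1 < k)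
    (x : ℝ) (hx : 1 < x) :
    (∫ t in Set.Ici (k : ℝ), (c / t) ^ t) ≤
      Real.exp (x * c / Real.exp 1) * x ^ (-(k : ℝ)) / Real.log x := by
  have hlx : 0 < Real.log x := Real.log_pos hx
  have hx0 : 0 < x := lt_trans one_pos hx
  have hk0 : (0 : ℝ) < k := lt_of_le_of_lt (by positivity) hk
  have key : ∀ t : ℝ, (k : ℝ) ≤ t →
      (c / t) ^ t ≤ Real.exp (x * c / Real.exp 1) * x ^ (-t) := by
    intro t ht
    have ht0 : 0 < t := lt_of_lt_of_le hk0 ht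
    have hbase : 0 < c / t := div_pos hc ht0
    have h1 : (c / t) ^ t * x ^ t = (c * x / t) ^ t := by
      rw [← Real.mul_rpow hbase.le hx0.le]
      ring_nf
    have h2 : (c * x / t) ^ t ≤ Real.exp (x * c / Real.exp 1) := by
      have := rpow_div_le_exp (mul_pos hc hx0) ht0
      rw [mul_comm x c]
      exact this
    have hxt : (0:ℝ) < x ^ t := Real.rpow_pos_of_pos hx0 t
    have : (c / t) ^ t ≤ Real.exp (x * c / Real.exp 1) / x ^ t := by
      rw [le_div_iff₀ hxt]
      calc (c / t) ^ t * x ^ t = (c * x / t) ^ t := h1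
        _ ≤ _ := h2
    rw [Real.rpow_neg hx0.le, ← div_eq_mul_inv]
    exact this
  -- the dominating function and its integrability
  set g : ℝ → ℝ := fun t => Real.exp (x * c / Real.exp 1) * x ^ (-t) with hg
  have hgeq : ∀ t : ℝ, g t = Real.exp (x * c / Real.exp 1) *
      Real.exp (-(Real.log x * t)) := by
    intro t
    rw [hg]
    simp only
    rw [Real.rpow_def_of_pos hx0]
    ring_nf
  have hgint : IntegrableOn g (Set.Ici (k : ℝ)) := by
    rw [integrableOn_Ici_iff_integrableOn_Ioi]
    have : IntegrableOn (fun t => Real.exp (-(Real.log x * t))) (Set.Ioi (k : ℝ)) := by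
      refine (exp_neg_integrableOn_Ioi _ hlx).congr_fun (fun t _ => by dsimp only; rw [neg_mul])
        measurableSet_Ioi
    exact IntegrableOn.congr_fun (this.const_mul _) (fun t _ => (hgeq t).symm) measurableSet_Ioi
  have hint : (∫ t in Set.Ici (k : ℝ), g t) =
      Real.exp (x * c / Real.exp 1) * x ^ (-(k : ℝ)) / Real.log x := by
    rw [MeasureTheory.integral_Ici_eq_integral_Ioi]
    calc (∫ t in Set.Ioi (k : ℝ), g t)
        = ∫ t in Set.Ioi (k : ℝ), Real.exp (x * c / Real.exp 1) *
            Real.exp (-(Real.log x * t)) := by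
          exact setIntegral_congr_fun measurableSet_Ioi (fun t _ => hgeq t)
      _ = Real.exp (x * c / Real.exp 1) *
            ∫ t in Set.Ioi (k : ℝ), Real.exp (-(Real.log x * t)) := by
          rw [MeasureTheory.integral_const_mul]
      _ = Real.exp (x * c / Real.exp 1) * (Real.exp (-(Real.log x * k)) / Real.log x) := by
          rw [integral_exp_neg_mul_Ioi _ hlx]
      _ = Real.exp (x * c / Real.exp 1) * x ^ (-(k : ℝ)) / Real.log x := by
          rw [show Real.exp (-(Real.log x * k)) = x ^ (-(k:ℝ)) by
            rw [Real.rpow_def_of_pos hx0]; ring_nf]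
          ring
  rw [← hint]
  refine integral_mono_of_nonneg ?_ hgint ?_
  · filter_upwards [self_mem_ae_restrict (measurableSet_Ici (a := (k:ℝ)))] with t ht
    have ht0 : 0 < t := lt_of_lt_of_le hk0 ht
    exact Real.rpow_nonneg (div_pos hc ht0).le t
  · filter_upwards [self_mem_ae_restrict (measurableSet_Ici (a := (k:ℝ)))] with t ht
    exact key t ht
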